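/- Let B and C be real symmetric positive definite n×n matrices and b, c ∈ ℝⁿ with b not contained in the ellipsoid E(C, c). Set C̄ = B^{-1/2} C B^{-1/2}, c̄ = B^{1/2}(c − b), C̃ = C̄^{-1}, c̃ = C̄^{-1/2} c̄, and let M' be the 2n×2n block matrix with blocks [[C̃, −I], [−c̃c̃ᵀ, C̃]]. Then M' has at least one real eigenvalue; letting λ₀(M') denote its smallest real eigenvalue, the matrix λ₀(M')I − C̃ is invertible, and the point x* = b + λ₀(M') B^{-1/2} (λ₀(M')I − C̃)^{-1} c̄ is the unique minimizer of the function x ↦ (x − b)ᵀB(x − b) over the ellipsoid E(C, c). -/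

import Mathlib

open Matrix

/-- The ellipsoid `E(A, a) = {x : (x − a)ᵀ A (x − a) ≤ 1}`. -/
def ellipsoid {n : ℕ} (A : Matrix (Fin n) (Fin n) ℝ) (a : Fin n → ℝ) : Set (Fin n → ℝ) :=
  {x | (x - a) ⬝ᵥ A.mulVec (x - a) ≤ 1}


namespace TouchingAux

variable {n : ℕ}

lemma herm_transpose_eq {A : Matrix (Fin n) (Fin n) ℝ} (h : A.IsHermitian) : Aᵀ = A := by
  rw [← Matrix.conjTranspose_eq_transpose_of_trivial]; exact h.eq

lemma dot_symm {M : Matrix (Fin n) (Fin n) ℝ} (hM : Mᵀ = M) (u v : Fin n → ℝ) :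
    u ⬝ᵥ (M *ᵥ v) = (M *ᵥ u) ⬝ᵥ v := by
  rw [Matrix.dotProduct_mulVec, ← Matrix.mulVec_transpose, hM]

lemma posdef_dot_pos {M : Matrix (Fin n) (Fin n) ℝ} (hM : M.PosDef) {x : Fin n → ℝ}
    (hx : x ≠ 0) : 0 < x ⬝ᵥ (M *ᵥ x) := by
  simpa using hM.dotProduct_mulVec_pos hx

lemma psd_dot_nonneg {M : Matrix (Fin n) (Fin n) ℝ} (hM : M.PosSemidef) (x : Fin n → ℝ) :
    0 ≤ x ⬝ᵥ (M *ᵥ x) := by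
  simpa using hM.dotProduct_mulVec_nonneg x

lemma dot_self_pos {x : Fin n → ℝ} (hx : x ≠ 0) : 0 < x ⬝ᵥ x := by
  have h0 : 0 ≤ x ⬝ᵥ x := by
    exact Finset.sum_nonneg fun i _ => mul_self_nonneg _
  rcases lt_or_eq_of_le h0 with h | h
  · exact h
  · exact absurd ((dotProduct_self_eq_zero).mp h.symm) hx

lemma mulVec_injective {S : Matrix (Fin n) (Fin n) ℝ} (hS : IsUnit S.det)
    {x : Fin n → ℝ} (hx : S *ᵥ x = 0) : x = 0 := by
  have : S⁻¹ *ᵥ (S *ᵥ x) = S⁻¹ *ᵥ 0 := by rw [hx]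
  rwa [Matrix.mulVec_mulVec, Matrix.nonsing_inv_mul _ hS, Matrix.one_mulVec,
    Matrix.mulVec_zero] at this

lemma posdef_conj {M S : Matrix (Fin n) (Fin n) ℝ} (hM : M.PosDef) (hS : IsUnit S.det)
    (hSt : Sᵀ = S) : (S * M * S).PosDef := by
  have hMt : Mᵀ = M := herm_transpose_eq hM.1
  refine Matrix.PosDef.of_dotProduct_mulVec_pos ?_ ?_
  · show (S * M * S)ᴴ = S * M * S
    rw [Matrix.conjTranspose_eq_transpose_of_trivial, Matrix.transpose_mul,
      Matrix.transpose_mul, hSt, hMt, Matrix.mul_assoc]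
  · intro x hx
    have hSx : S *ᵥ x ≠ 0 := fun h => hx (mulVec_injective hS h)
    have : (S * M * S) *ᵥ x = S *ᵥ (M *ᵥ (S *ᵥ x)) := by
      rw [Matrix.mulVec_mulVec, Matrix.mulVec_mulVec, Matrix.mul_assoc]
    have hpos := posdef_dot_pos hM hSx
    have hstar : star x = x := by
      funext i; simp
    rw [hstar, this, dot_symm hSt]
    exact hpos

lemma shift_posdef {M : Matrix (Fin n) (Fin n) ℝ} (hM : M.PosDef) {l : ℝ} (hl : l ≤ 0) :
    (M - l • 1).PosDef := by
  refine Matrix.PosDef.of_dotProduct_mulVec_pos ?_ ?_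
  · show (M - l • 1)ᴴ = M - l • 1
    rw [Matrix.conjTranspose_sub, Matrix.conjTranspose_smul, Matrix.conjTranspose_one,
      hM.1.eq]
    norm_num
  · intro x hx
    have hstar : star x = x := by funext i; simp
    have h1 : (M - l • 1) *ᵥ x = M *ᵥ x - l • x := by
      rw [Matrix.sub_mulVec, Matrix.smul_mulVec, Matrix.one_mulVec]
    rw [hstar, h1, dotProduct_sub, dotProduct_smul]
    have h2 := posdef_dot_pos hM hx
    have h3 := dot_self_pos hx
    have : l * (x ⬝ᵥ x) ≤ 0 := mul_nonpos_of_nonpos_of_nonneg hl h3.le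
    simp only [smul_eq_mul]
    linarith

lemma inv_comm' {X Y : Matrix (Fin n) (Fin n) ℝ} (hX : IsUnit X.det) (h : X * Y = Y * X) :
    X⁻¹ * Y = Y * X⁻¹ := by
  have h1 : X⁻¹ * (X * Y) * X⁻¹ = X⁻¹ * (Y * X) * X⁻¹ := by rw [h]
  have h2 : X⁻¹ * (X * Y) * X⁻¹ = Y * X⁻¹ := by
    rw [← Matrix.mul_assoc, Matrix.nonsing_inv_mul _ hX, Matrix.one_mul]
  have h3 : X⁻¹ * (Y * X) * X⁻¹ = X⁻¹ * Y := by
    rw [← Matrix.mul_assoc, Matrix.mul_assoc (X⁻¹ * Y), Matrix.mul_nonsing_inv _ hX,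
      Matrix.mul_one]
  rw [h2, h3] at h1
  exact h1.symm

lemma quad_conj {M S : Matrix (Fin n) (Fin n) ℝ} (hSt : Sᵀ = S) (v : Fin n → ℝ) :
    v ⬝ᵥ ((S * M * S) *ᵥ v) = (S *ᵥ v) ⬝ᵥ (M *ᵥ (S *ᵥ v)) := by
  have h : (S * M * S) *ᵥ v = S *ᵥ (M *ᵥ (S *ᵥ v)) := by
    rw [Matrix.mulVec_mulVec, Matrix.mulVec_mulVec, Matrix.mul_assoc]
  rw [h, dot_symm hSt]

lemma vecMulVec_mulVec' (a b u : Fin n → ℝ) :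
    Matrix.vecMulVec a b *ᵥ u = (b ⬝ᵥ u) • a := by
  funext i
  simp only [Matrix.mulVec, dotProduct, Matrix.vecMulVec_apply, Pi.smul_apply,
    smul_eq_mul]
  rw [Finset.sum_mul]
  exact Finset.sum_congr rfl fun j _ => by ring

end TouchingAux

set_option maxHeartbeats 1600000

/-- The paper's Lemma 2 (Rimon–Boyd): for positive definite `B, C` and centers `b ∉ E(C, c)`,
with `C̄ = B^{-1/2} C B^{-1/2}`, `c̄ = B^{1/2}(c − b)`, `C̃ = C̄⁻¹`, `c̃ = C̄^{-1/2} c̄`, the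
`2n × 2n` block matrix `M' = [[C̃, −I], [−c̃c̃ᵀ, C̃]]` has a real eigenvalue; its smallest
real eigenvalue `λ₀` makes `λ₀ I − C̃` invertible, and
`x* = b + λ₀ B^{-1/2} (λ₀ I − C̃)^{-1} c̄` is the unique minimizer of
`x ↦ (x − b)ᵀ B (x − b)` over `E(C, c)`. -/
theorem touching_point_of_ellipsoids
    {n : ℕ} (B C : Matrix (Fin n) (Fin n) ℝ) (hB : B.PosDef) (hC : C.PosDef)
    (b c : Fin n → ℝ) (hb : b ∉ ellipsoid C c)
    (Bhalf : Matrix (Fin n) (Fin n) ℝ) (hBhalf : Bhalf.PosDef) (hBsq : Bhalf * Bhalf = B)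
    (Cbarhalf : Matrix (Fin n) (Fin n) ℝ) (hCbarhalf : Cbarhalf.PosDef)
    (hCbarsq : Cbarhalf * Cbarhalf = Bhalf⁻¹ * C * Bhalf⁻¹) :
    let Ctil : Matrix (Fin n) (Fin n) ℝ := (Bhalf⁻¹ * C * Bhalf⁻¹)⁻¹
    let cbar : Fin n → ℝ := Bhalf.mulVec (c - b)
    let ctil : Fin n → ℝ := Cbarhalf⁻¹.mulVec cbar
    let M' : Matrix (Fin n ⊕ Fin n) (Fin n ⊕ Fin n) ℝ :=
      Matrix.fromBlocks Ctil (-1) (-(vecMulVec ctil ctil)) Ctil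
    ∃ lam0 : ℝ, IsLeast (spectrum ℝ M') lam0 ∧
      IsUnit (lam0 • (1 : Matrix (Fin n) (Fin n) ℝ) - Ctil) ∧
      (let xstar : Fin n → ℝ :=
        b + lam0 • (Bhalf⁻¹ * (lam0 • (1 : Matrix (Fin n) (Fin n) ℝ) - Ctil)⁻¹).mulVec cbar
       xstar ∈ ellipsoid C c ∧
       ∀ x ∈ ellipsoid C c, x ≠ xstar →
         (xstar - b) ⬝ᵥ B.mulVec (xstar - b) < (x - b) ⬝ᵥ B.mulVec (x - b)) := by
  intro Ctil cbar ctil M'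
  classical
  -- basic positivity and symmetry facts
  have hBt : Bhalfᵀ = Bhalf := TouchingAux.herm_transpose_eq hBhalf.1
  have hBu : IsUnit Bhalf.det := isUnit_iff_ne_zero.mpr hBhalf.det_pos.ne'
  have hBinv : (Bhalf⁻¹).PosDef := hBhalf.inv
  have hBit : (Bhalf⁻¹)ᵀ = Bhalf⁻¹ := TouchingAux.herm_transpose_eq hBinv.1
  have hBiu : IsUnit (Bhalf⁻¹).det := isUnit_iff_ne_zero.mpr hBinv.det_pos.ne'
  have hCb : (Bhalf⁻¹ * C * Bhalf⁻¹).PosDef := TouchingAux.posdef_conj hC hBiu hBit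
  have hCbu : IsUnit (Bhalf⁻¹ * C * Bhalf⁻¹).det := isUnit_iff_ne_zero.mpr hCb.det_pos.ne'
  have hCbt : (Bhalf⁻¹ * C * Bhalf⁻¹)ᵀ = Bhalf⁻¹ * C * Bhalf⁻¹ :=
    TouchingAux.herm_transpose_eq hCb.1
  have hCt : Ctil.PosDef := hCb.inv
  have hCtu : IsUnit Ctil.det := isUnit_iff_ne_zero.mpr hCt.det_pos.ne'
  have hCtt : Ctilᵀ = Ctil := TouchingAux.herm_transpose_eq hCt.1
  have hHt : Cbarhalfᵀ = Cbarhalf := TouchingAux.herm_transpose_eq hCbarhalf.1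
  have hHu : IsUnit Cbarhalf.det := isUnit_iff_ne_zero.mpr hCbarhalf.det_pos.ne'
  have hHinv : (Cbarhalf⁻¹).PosDef := hCbarhalf.inv
  have hHit : (Cbarhalf⁻¹)ᵀ = Cbarhalf⁻¹ := TouchingAux.herm_transpose_eq hHinv.1
  have hHiu : IsUnit (Cbarhalf⁻¹).det := isUnit_iff_ne_zero.mpr hHinv.det_pos.ne'
  -- commutation facts
  have hcomm1 : (Bhalf⁻¹ * C * Bhalf⁻¹) * Cbarhalf = Cbarhalf * (Bhalf⁻¹ * C * Bhalf⁻¹) := by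
    rw [← hCbarsq, Matrix.mul_assoc]
  have hcommCt : Ctil * Cbarhalf = Cbarhalf * Ctil := TouchingAux.inv_comm' hCbu hcomm1
  have hcommHi : Cbarhalf⁻¹ * Ctil = Ctil * Cbarhalf⁻¹ :=
    TouchingAux.inv_comm' hHu hcommCt.symm
  have hHCt : Cbarhalf * Ctil = Cbarhalf⁻¹ := by
    have h1 : Cbarhalf * (Cbarhalf * Ctil) = 1 := by
      rw [← Matrix.mul_assoc, hCbarsq]
      exact Matrix.mul_nonsing_inv _ hCbu
    exact (Matrix.inv_eq_right_inv h1).symm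
  -- the conjugation identity C = Bhalf * Cb * Bhalf
  have hBC : Bhalf * (Bhalf⁻¹ * C * Bhalf⁻¹) * Bhalf = C := by
    have h : Bhalf * (Bhalf⁻¹ * C * Bhalf⁻¹) * Bhalf
        = Bhalf * Bhalf⁻¹ * C * (Bhalf⁻¹ * Bhalf) := by
      simp only [Matrix.mul_assoc]
    rw [h, Matrix.mul_nonsing_inv _ hBu, Matrix.nonsing_inv_mul _ hBu, Matrix.one_mul,
      Matrix.mul_one]
  -- shifted matrices
  have hApd : ∀ l : ℝ, l ≤ 0 → (Ctil - l • (1 : Matrix (Fin n) (Fin n) ℝ)).PosDef :=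
    fun l hl => TouchingAux.shift_posdef hCt hl
  have hAu : ∀ l : ℝ, l ≤ 0 → IsUnit (Ctil - l • (1 : Matrix (Fin n) (Fin n) ℝ)).det :=
    fun l hl => isUnit_iff_ne_zero.mpr (hApd l hl).det_pos.ne'
  have hAit : ∀ l : ℝ, l ≤ 0 →
      ((Ctil - l • (1 : Matrix (Fin n) (Fin n) ℝ))⁻¹)ᵀ
        = (Ctil - l • (1 : Matrix (Fin n) (Fin n) ℝ))⁻¹ := fun l hl =>
    TouchingAux.herm_transpose_eq (hApd l hl).inv.1
  -- the key scalar function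
  set f : ℝ → ℝ := fun l =>
    ((Ctil - l • (1 : Matrix (Fin n) (Fin n) ℝ))⁻¹ *ᵥ ctil) ⬝ᵥ
      ((Ctil - l • (1 : Matrix (Fin n) (Fin n) ℝ))⁻¹ *ᵥ ctil) with hfdef
  -- value at zero
  have hf0 : f 0 = (c - b) ⬝ᵥ (C *ᵥ (c - b)) := by
    have h1 : Ctil⁻¹ = Bhalf⁻¹ * C * Bhalf⁻¹ := Matrix.nonsing_inv_nonsing_inv _ hCbu
    have h2 : (Bhalf⁻¹ * C * Bhalf⁻¹) *ᵥ ctil = Cbarhalf *ᵥ cbar := by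
      show (Bhalf⁻¹ * C * Bhalf⁻¹) *ᵥ (Cbarhalf⁻¹ *ᵥ cbar) = _
      rw [Matrix.mulVec_mulVec, ← hCbarsq, Matrix.mul_assoc, Matrix.mul_nonsing_inv _ hHu,
        Matrix.mul_one]
    have h3 : (Cbarhalf *ᵥ cbar) ⬝ᵥ (Cbarhalf *ᵥ cbar)
        = cbar ⬝ᵥ ((Cbarhalf * Cbarhalf) *ᵥ cbar) := by
      rw [← Matrix.mulVec_mulVec]
      exact (TouchingAux.dot_symm hHt cbar _).symm
    rw [hfdef]
    simp only [zero_smul, sub_zero]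
    rw [h1, h2, h3, hCbarsq]
    show (Bhalf *ᵥ (c - b)) ⬝ᵥ ((Bhalf⁻¹ * C * Bhalf⁻¹) *ᵥ (Bhalf *ᵥ (c - b))) = _
    rw [← TouchingAux.quad_conj hBt, hBC]
  have hgt1 : 1 < f 0 := by
    rw [hf0]
    have hbc := hb
    simp only [ellipsoid, Set.mem_setOf_eq, not_le] at hbc
    have heq : (c - b) ⬝ᵥ (C *ᵥ (c - b)) = (b - c) ⬝ᵥ (C *ᵥ (b - c)) := by
      rw [show c - b = -(b - c) from (neg_sub b c).symm, Matrix.mulVec_neg,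
        neg_dotProduct_neg]
    linarith [hbc, heq.le, heq.ge]
  have hctne : ctil ≠ 0 := by
    intro h
    rw [hfdef] at hgt1
    simp only [h, Matrix.mulVec_zero, dotProduct_zero] at hgt1
    linarith
  -- strict monotonicity
  have hmono : ∀ l1 l2 : ℝ, l1 < l2 → l2 ≤ 0 → f l1 < f l2 := by
    intro l1 l2 h12 h20
    have h10 : l1 ≤ 0 := by linarith
    simp only [hfdef]
    set A1 := Ctil - l1 • (1 : Matrix (Fin n) (Fin n) ℝ) with hA1def
    set A2 := Ctil - l2 • (1 : Matrix (Fin n) (Fin n) ℝ) with hA2def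
    have hA1u : IsUnit A1.det := hAu _ h10
    have hA2u : IsUnit A2.det := hAu _ h20
    set w1 := A1⁻¹ *ᵥ ctil with hw1def
    set w2 := A2⁻¹ *ᵥ ctil with hw2def
    have hw1 : A1 *ᵥ w1 = ctil := by
      rw [hw1def, Matrix.mulVec_mulVec, Matrix.mul_nonsing_inv _ hA1u, Matrix.one_mulVec]
    have hw2 : A2 *ᵥ w2 = ctil := by
      rw [hw2def, Matrix.mulVec_mulVec, Matrix.mul_nonsing_inv _ hA2u, Matrix.one_mulVec]
    have hw1ne : w1 ≠ 0 := by
      intro h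
      apply hctne
      rw [← hw1, h, Matrix.mulVec_zero]
    have hA1eq : A1 = A2 + (l2 - l1) • (1 : Matrix (Fin n) (Fin n) ℝ) := by
      rw [hA1def, hA2def, sub_smul]
      abel
    have hrel : A1 *ᵥ w1 = A2 *ᵥ w1 + (l2 - l1) • w1 := by
      rw [hA1eq, Matrix.add_mulVec, Matrix.smul_mulVec, Matrix.one_mulVec]
    have hcancel2 : ∀ v : Fin n → ℝ, A2 *ᵥ (A2⁻¹ *ᵥ v) = v := fun v => by
      rw [Matrix.mulVec_mulVec, Matrix.mul_nonsing_inv _ hA2u, Matrix.one_mulVec]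
    have hcancel5 : ∀ v : Fin n → ℝ, A2⁻¹ *ᵥ (A2 *ᵥ v) = v := fun v => by
      rw [Matrix.mulVec_mulVec, Matrix.nonsing_inv_mul _ hA2u, Matrix.one_mulVec]
    have hw2eq : w2 = w1 + (l2 - l1) • (A2⁻¹ *ᵥ w1) := by
      have h3 : A2 *ᵥ w2 = A2 *ᵥ (w1 + (l2 - l1) • (A2⁻¹ *ᵥ w1)) := by
        rw [hw2, Matrix.mulVec_add, Matrix.mulVec_smul, hcancel2, ← hrel, hw1]
      calc w2 = A2⁻¹ *ᵥ (A2 *ᵥ w2) := (hcancel5 w2).symm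
        _ = A2⁻¹ *ᵥ (A2 *ᵥ (w1 + (l2 - l1) • (A2⁻¹ *ᵥ w1))) := by rw [h3]
        _ = _ := hcancel5 _
    have hgpos : 0 < w1 ⬝ᵥ (A2⁻¹ *ᵥ w1) :=
      TouchingAux.posdef_dot_pos (hApd _ h20).inv hw1ne
    have hggnn : 0 ≤ (A2⁻¹ *ᵥ w1) ⬝ᵥ (A2⁻¹ *ᵥ w1) := by
      rcases eq_or_ne (A2⁻¹ *ᵥ w1) 0 with h | h
      · rw [h]; simp
      · exact (TouchingAux.dot_self_pos h).le
    have hexp : w2 ⬝ᵥ w2 = w1 ⬝ᵥ w1 + 2 * (l2 - l1) * (w1 ⬝ᵥ (A2⁻¹ *ᵥ w1))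
        + (l2 - l1) ^ 2 * ((A2⁻¹ *ᵥ w1) ⬝ᵥ (A2⁻¹ *ᵥ w1)) := by
      rw [hw2eq]
      simp only [dotProduct_add, add_dotProduct, dotProduct_smul,
        smul_dotProduct, smul_eq_mul]
      rw [dotProduct_comm (A2⁻¹ *ᵥ w1) w1]
      ring
    rw [hexp]
    nlinarith [hgpos, hggnn, sq_nonneg (l2 - l1)]
  -- negative value far to the left
  have hK0 : (0:ℝ) ≤ ctil ⬝ᵥ ctil := (TouchingAux.dot_self_pos hctne).le
  set s : ℝ := -(Real.sqrt (ctil ⬝ᵥ ctil) + 1) with hsdef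
  have hs0 : s < 0 := by
    have := Real.sqrt_nonneg (ctil ⬝ᵥ ctil)
    rw [hsdef]; linarith
  have hfs : f s < 1 := by
    simp only [hfdef]
    set As := Ctil - s • (1 : Matrix (Fin n) (Fin n) ℝ) with hAsdef
    have hAs : As.PosDef := hApd _ hs0.le
    have hAsu : IsUnit As.det := hAu _ hs0.le
    set w := As⁻¹ *ᵥ ctil with hwdef
    have hAw : As *ᵥ w = ctil := by
      rw [hwdef, Matrix.mulVec_mulVec, Matrix.mul_nonsing_inv _ hAsu, Matrix.one_mulVec]
    by_cases hw : w = 0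
    · rw [hw]; simp
    · have hWpos : 0 < w ⬝ᵥ w := TouchingAux.dot_self_pos hw
      have h1 : (-s) * (w ⬝ᵥ w) ≤ w ⬝ᵥ ctil := by
        have hCnn : 0 ≤ w ⬝ᵥ (Ctil *ᵥ w) := TouchingAux.psd_dot_nonneg hCt.posSemidef w
        have h2 : w ⬝ᵥ (As *ᵥ w) = w ⬝ᵥ (Ctil *ᵥ w) - s * (w ⬝ᵥ w) := by
          rw [hAsdef, Matrix.sub_mulVec, Matrix.smul_mulVec, Matrix.one_mulVec,
            dotProduct_sub, dotProduct_smul, smul_eq_mul]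
        have h3 : w ⬝ᵥ ctil = w ⬝ᵥ (Ctil *ᵥ w) - s * (w ⬝ᵥ w) := by rw [← hAw, h2]
        linarith
      have h2 : (w ⬝ᵥ ctil) ^ 2 ≤ (w ⬝ᵥ w) * (ctil ⬝ᵥ ctil) := by
        have hcs := Finset.sum_mul_sq_le_sq_mul_sq Finset.univ w ctil
        have e1 : (∑ i, w i * ctil i) = w ⬝ᵥ ctil := rfl
        have e2 : (∑ i, w i ^ 2) = w ⬝ᵥ w := by
          simp only [dotProduct, sq]
        have e3 : (∑ i, ctil i ^ 2) = ctil ⬝ᵥ ctil := by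
          simp only [dotProduct, sq]
        rw [e1, e2, e3] at hcs
        exact hcs
      have hKlt : ctil ⬝ᵥ ctil < s ^ 2 := by
        have hsq : Real.sqrt (ctil ⬝ᵥ ctil) ^ 2 = ctil ⬝ᵥ ctil := Real.sq_sqrt hK0
        have hnn := Real.sqrt_nonneg (ctil ⬝ᵥ ctil)
        rw [hsdef]
        nlinarith
      have hspos : 0 < -s := by linarith
      have h3 : ((-s) * (w ⬝ᵥ w)) ^ 2 ≤ (w ⬝ᵥ ctil) ^ 2 := by
        nlinarith [mul_pos hspos hWpos]
      have h4 : s ^ 2 * (w ⬝ᵥ w) ≤ ctil ⬝ᵥ ctil := by nlinarith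
      nlinarith
  -- continuity and the intermediate value theorem
  have hcont : ContinuousOn f (Set.Icc s 0) := by
    have hAc : Continuous fun l : ℝ => Ctil - l • (1 : Matrix (Fin n) (Fin n) ℝ) :=
      continuous_const.sub (continuous_id.smul continuous_const)
    have hdetne : ∀ l ∈ Set.Icc s 0,
        (Ctil - l • (1 : Matrix (Fin n) (Fin n) ℝ)).det ≠ 0 := fun l hl =>
      (hApd l hl.2).det_pos.ne'
    have hinv : ContinuousOn
        (fun l : ℝ => (Ctil - l • (1 : Matrix (Fin n) (Fin n) ℝ))⁻¹) (Set.Icc s 0) := by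
      have heq : (fun l : ℝ => (Ctil - l • (1 : Matrix (Fin n) (Fin n) ℝ))⁻¹)
          = fun l => ((Ctil - l • (1 : Matrix (Fin n) (Fin n) ℝ)).det)⁻¹ •
              (Ctil - l • (1 : Matrix (Fin n) (Fin n) ℝ)).adjugate := by
        funext l
        rw [Matrix.inv_def, Ring.inverse_eq_inv]
      rw [heq]
      exact ((hAc.matrix_det.continuousOn).inv₀ hdetne).smul hAc.matrix_adjugate.continuousOn
    have hfc : f = (fun M : Matrix (Fin n) (Fin n) ℝ => (M *ᵥ ctil) ⬝ᵥ (M *ᵥ ctil)) ∘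
        (fun l : ℝ => (Ctil - l • (1 : Matrix (Fin n) (Fin n) ℝ))⁻¹) := by
      funext l
      simp only [hfdef, Function.comp_apply]
    rw [hfc]
    exact Continuous.comp_continuousOn
      ((continuous_id.matrix_mulVec continuous_const).dotProduct
        (continuous_id.matrix_mulVec continuous_const)) hinv
  have hivt := intermediate_value_Ioo (le_of_lt hs0) hcont
  obtain ⟨lam0, hlam0mem, hflam⟩ := hivt ⟨hfs, hgt1⟩
  obtain ⟨hsl, hl0⟩ := hlam0mem
  -- facts about `A0 = Ctil - lam0 • 1`
  have hA0 : (Ctil - lam0 • (1 : Matrix (Fin n) (Fin n) ℝ)).PosDef := hApd _ hl0.le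
  have hA0u : IsUnit (Ctil - lam0 • (1 : Matrix (Fin n) (Fin n) ℝ)).det := hAu _ hl0.le
  have hnegeq : lam0 • (1 : Matrix (Fin n) (Fin n) ℝ) - Ctil
      = -(Ctil - lam0 • (1 : Matrix (Fin n) (Fin n) ℝ)) := (neg_sub _ _).symm
  have hisunit : IsUnit (lam0 • (1 : Matrix (Fin n) (Fin n) ℝ) - Ctil) := by
    rw [hnegeq, Matrix.isUnit_iff_isUnit_det, Matrix.det_neg]
    exact isUnit_iff_ne_zero.mpr
      (mul_ne_zero (pow_ne_zero _ (by norm_num)) hA0.det_pos.ne')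
  have hinvneg : (lam0 • (1 : Matrix (Fin n) (Fin n) ℝ) - Ctil)⁻¹
      = -(Ctil - lam0 • (1 : Matrix (Fin n) (Fin n) ℝ))⁻¹ := by
    rw [hnegeq]
    refine Matrix.inv_eq_right_inv ?_
    rw [Matrix.neg_mul, Matrix.mul_neg, neg_neg, Matrix.mul_nonsing_inv _ hA0u]
  refine ⟨lam0, ⟨?_, ?_⟩, hisunit, ?_⟩
  · -- lam0 ∈ spectrum ℝ M'
    rw [spectrum.mem_iff]
    have halg : (algebraMap ℝ (Matrix (Fin n ⊕ Fin n) (Fin n ⊕ Fin n) ℝ)) lam0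
        = lam0 • (1 : Matrix (Fin n ⊕ Fin n) (Fin n ⊕ Fin n) ℝ) :=
      Algebra.algebraMap_eq_smul_one _
    have hcancel : ∀ v : Fin n → ℝ,
        (Ctil - lam0 • (1 : Matrix (Fin n) (Fin n) ℝ)) *ᵥ
          ((Ctil - lam0 • (1 : Matrix (Fin n) (Fin n) ℝ))⁻¹ *ᵥ v) = v := fun v => by
      rw [Matrix.mulVec_mulVec, Matrix.mul_nonsing_inv _ hA0u, Matrix.one_mulVec]
    set R0 := (Ctil - lam0 • (1 : Matrix (Fin n) (Fin n) ℝ))⁻¹ with hR0def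
    set w := R0 *ᵥ ctil with hwdef
    set u := R0 *ᵥ w with hudef
    have hAu' : (Ctil - lam0 • (1 : Matrix (Fin n) (Fin n) ℝ)) *ᵥ u = w := hcancel w
    have hAw : (Ctil - lam0 • (1 : Matrix (Fin n) (Fin n) ℝ)) *ᵥ w = ctil := hcancel ctil
    have hwne : w ≠ 0 := fun h => hctne (by rw [← hAw, h, Matrix.mulVec_zero])
    have hcu : ctil ⬝ᵥ u = 1 := by
      have h1 : ctil ⬝ᵥ u = (R0 *ᵥ ctil) ⬝ᵥ w := by
        rw [hudef, hR0def, TouchingAux.dot_symm (hAit _ hl0.le)]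
      rw [h1, ← hwdef]
      have h2 := hflam
      simp only [hfdef] at h2
      exact h2
    have hzne : Sum.elim u w ≠ 0 := by
      intro h
      apply hwne
      funext i
      exact congrFun h (Sum.inr i)
    have hc1 : Ctil *ᵥ u + (-1 : Matrix (Fin n) (Fin n) ℝ) *ᵥ w = lam0 • u := by
      have h2 : Ctil *ᵥ u - lam0 • u = w := by
        rw [← hAu', Matrix.sub_mulVec, Matrix.smul_mulVec, Matrix.one_mulVec]
      have h3 : (-1 : Matrix (Fin n) (Fin n) ℝ) *ᵥ w = -w := by
        rw [Matrix.neg_mulVec, Matrix.one_mulVec]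
      rw [h3, ← h2]
      abel
    have hc2 : (-(vecMulVec ctil ctil)) *ᵥ u + Ctil *ᵥ w = lam0 • w := by
      have h3 : (vecMulVec ctil ctil) *ᵥ u = ctil := by
        rw [TouchingAux.vecMulVec_mulVec', hcu, one_smul]
      have h4 : Ctil *ᵥ w - lam0 • w = ctil := by
        rw [← hAw, Matrix.sub_mulVec, Matrix.smul_mulVec, Matrix.one_mulVec]
      rw [Matrix.neg_mulVec, h3, ← h4]
      abel
    have hMz : M' *ᵥ (Sum.elim u w) = lam0 • (Sum.elim u w) := by
      show (Matrix.fromBlocks Ctil (-1) (-(vecMulVec ctil ctil)) Ctil) *ᵥ _ = _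
      rw [Matrix.fromBlocks_mulVec, Sum.elim_comp_inl, Sum.elim_comp_inr, hc1, hc2]
      funext i
      cases i with
      | inl i => simp
      | inr i => simp
    intro hunit
    have hker : ((algebraMap ℝ (Matrix (Fin n ⊕ Fin n) (Fin n ⊕ Fin n) ℝ)) lam0 - M') *ᵥ
        (Sum.elim u w) = 0 := by
      rw [halg, Matrix.sub_mulVec, Matrix.smul_mulVec, Matrix.one_mulVec, hMz, sub_self]
    have hdet0 : ((algebraMap ℝ (Matrix (Fin n ⊕ Fin n) (Fin n ⊕ Fin n) ℝ)) lam0 - M').det = 0 :=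
      Matrix.exists_mulVec_eq_zero_iff.mp ⟨_, hzne, hker⟩
    exact ((Matrix.isUnit_iff_isUnit_det _).mp hunit).ne_zero hdet0
  · -- lower bound
    intro mu hmu
    by_contra hlt'
    push_neg at hlt'
    have hlt : mu < lam0 := hlt'
    have hmu0 : mu < 0 := lt_trans hlt hl0
    rw [spectrum.mem_iff] at hmu
    have halg : (algebraMap ℝ (Matrix (Fin n ⊕ Fin n) (Fin n ⊕ Fin n) ℝ)) mu
        = mu • (1 : Matrix (Fin n ⊕ Fin n) (Fin n ⊕ Fin n) ℝ) :=
      Algebra.algebraMap_eq_smul_one _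
    have hdet0 : ((algebraMap ℝ (Matrix (Fin n ⊕ Fin n) (Fin n ⊕ Fin n) ℝ)) mu - M').det = 0 := by
      by_contra hdd
      exact hmu ((Matrix.isUnit_iff_isUnit_det _).mpr (isUnit_iff_ne_zero.mpr hdd))
    obtain ⟨v, hvne, hv0⟩ := Matrix.exists_mulVec_eq_zero_iff.mpr hdet0
    have hMv : M' *ᵥ v = mu • v := by
      rw [halg, Matrix.sub_mulVec, Matrix.smul_mulVec, Matrix.one_mulVec] at hv0
      exact (sub_eq_zero.mp hv0).symm
    have hcomp := hMv
    rw [show M' = Matrix.fromBlocks Ctil (-1) (-(vecMulVec ctil ctil)) Ctil from rfl,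
      Matrix.fromBlocks_mulVec] at hcomp
    have hc1 : Ctil *ᵥ (v ∘ Sum.inl) + (-1 : Matrix (Fin n) (Fin n) ℝ) *ᵥ (v ∘ Sum.inr)
        = mu • (v ∘ Sum.inl) := by
      funext i
      have h := congrFun hcomp (Sum.inl i)
      simpa using h
    have hc2 : (-(vecMulVec ctil ctil)) *ᵥ (v ∘ Sum.inl) + Ctil *ᵥ (v ∘ Sum.inr)
        = mu • (v ∘ Sum.inr) := by
      funext i
      have h := congrFun hcomp (Sum.inr i)
      simpa using h
    have hAmuu : IsUnit (Ctil - mu • (1 : Matrix (Fin n) (Fin n) ℝ)).det := hAu _ hmu0.le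
    have hwu : (Ctil - mu • (1 : Matrix (Fin n) (Fin n) ℝ)) *ᵥ (v ∘ Sum.inl) = v ∘ Sum.inr := by
      rw [Matrix.sub_mulVec, Matrix.smul_mulVec, Matrix.one_mulVec]
      have h := hc1
      rw [Matrix.neg_mulVec, Matrix.one_mulVec] at h
      rw [← h]
      abel
    have hA2u' : (Ctil - mu • (1 : Matrix (Fin n) (Fin n) ℝ)) *ᵥ
        ((Ctil - mu • (1 : Matrix (Fin n) (Fin n) ℝ)) *ᵥ (v ∘ Sum.inl))
        = (ctil ⬝ᵥ (v ∘ Sum.inl)) • ctil := by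
      rw [hwu, Matrix.sub_mulVec, Matrix.smul_mulVec, Matrix.one_mulVec]
      have h := hc2
      rw [Matrix.neg_mulVec, TouchingAux.vecMulVec_mulVec'] at h
      rw [← h]
      abel
    have hune : v ∘ Sum.inl ≠ 0 := by
      intro h
      apply hvne
      have hw0 : v ∘ Sum.inr = 0 := by rw [← hwu, h, Matrix.mulVec_zero]
      funext i
      cases i with
      | inl i => exact congrFun h i
      | inr i => exact congrFun hw0 i
    have hcune : ctil ⬝ᵥ (v ∘ Sum.inl) ≠ 0 := by
      intro h0
      apply hune
      have h1 : (Ctil - mu • (1 : Matrix (Fin n) (Fin n) ℝ)) *ᵥ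
          ((Ctil - mu • (1 : Matrix (Fin n) (Fin n) ℝ)) *ᵥ (v ∘ Sum.inl)) = 0 := by
        rw [hA2u', h0, zero_smul]
      exact TouchingAux.mulVec_injective hAmuu (TouchingAux.mulVec_injective hAmuu h1)
    have hcancel : ∀ x : Fin n → ℝ, (Ctil - mu • (1 : Matrix (Fin n) (Fin n) ℝ))⁻¹ *ᵥ
        ((Ctil - mu • (1 : Matrix (Fin n) (Fin n) ℝ)) *ᵥ x) = x := fun x => by
      rw [Matrix.mulVec_mulVec, Matrix.nonsing_inv_mul _ hAmuu, Matrix.one_mulVec]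
    have h8 : (Ctil - mu • (1 : Matrix (Fin n) (Fin n) ℝ)) *ᵥ (v ∘ Sum.inl)
        = (ctil ⬝ᵥ (v ∘ Sum.inl)) • ((Ctil - mu • (1 : Matrix (Fin n) (Fin n) ℝ))⁻¹ *ᵥ ctil) := by
      have h7 := congrArg
        (fun t => (Ctil - mu • (1 : Matrix (Fin n) (Fin n) ℝ))⁻¹ *ᵥ t) hA2u'
      simp only [hcancel, Matrix.mulVec_smul] at h7
      exact h7
    have hueq : v ∘ Sum.inl = (ctil ⬝ᵥ (v ∘ Sum.inl)) •
        ((Ctil - mu • (1 : Matrix (Fin n) (Fin n) ℝ))⁻¹ *ᵥ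
          ((Ctil - mu • (1 : Matrix (Fin n) (Fin n) ℝ))⁻¹ *ᵥ ctil)) := by
      have h9 := congrArg
        (fun t => (Ctil - mu • (1 : Matrix (Fin n) (Fin n) ℝ))⁻¹ *ᵥ t) h8
      simp only [hcancel, Matrix.mulVec_smul] at h9
      exact h9
    have hfmu : ctil ⬝ᵥ (v ∘ Sum.inl) = (ctil ⬝ᵥ (v ∘ Sum.inl)) * f mu := by
      conv_lhs => rw [hueq]
      rw [dotProduct_smul, smul_eq_mul]
      congr 1
      rw [TouchingAux.dot_symm (hAit _ hmu0.le)]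
    have hfmu1 : f mu = 1 := by
      have h10 : (ctil ⬝ᵥ (v ∘ Sum.inl)) * 1 = (ctil ⬝ᵥ (v ∘ Sum.inl)) * f mu := by
        rw [mul_one]; exact hfmu
      exact (mul_left_cancel₀ hcune h10).symm
    have hlt2 := hmono mu lam0 hlt hl0.le
    rw [hflam, hfmu1] at hlt2
    exact lt_irrefl _ hlt2
  · -- the minimizer
    intro xstar
    set nu : ℝ := -lam0 with hnudef
    have hnu : 0 < nu := by rw [hnudef]; linarith
    set R0 := (Ctil - lam0 • (1 : Matrix (Fin n) (Fin n) ℝ))⁻¹ with hR0def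
    have hxsb : xstar - b = lam0 •
        ((Bhalf⁻¹ * (lam0 • (1 : Matrix (Fin n) (Fin n) ℝ) - Ctil)⁻¹) *ᵥ cbar) := by
      show (b + _) - b = _
      exact add_sub_cancel_left _ _
    have hys : Bhalf *ᵥ (xstar - b) = nu • (R0 *ᵥ cbar) := by
      rw [hxsb, Matrix.mulVec_smul, Matrix.mulVec_mulVec, ← Matrix.mul_assoc,
        Matrix.mul_nonsing_inv _ hBu, Matrix.one_mul, hinvneg, Matrix.neg_mulVec, smul_neg,
        ← neg_smul, ← hnudef]
    set ystar := nu • (R0 *ᵥ cbar) with hysdef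
    have hA0R : (Ctil - lam0 • (1 : Matrix (Fin n) (Fin n) ℝ)) * R0 = 1 :=
      Matrix.mul_nonsing_inv _ hA0u
    have hA0' : Ctil - lam0 • (1 : Matrix (Fin n) (Fin n) ℝ)
        = Ctil + nu • (1 : Matrix (Fin n) (Fin n) ℝ) := by
      rw [hnudef, sub_eq_add_neg, ← neg_smul]
    have hCbCt : (Bhalf⁻¹ * C * Bhalf⁻¹) * Ctil = 1 := Matrix.mul_nonsing_inv _ hCbu
    have h1 : (Bhalf⁻¹ * C * Bhalf⁻¹) * (Ctil - lam0 • (1 : Matrix (Fin n) (Fin n) ℝ))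
        = 1 + nu • (Bhalf⁻¹ * C * Bhalf⁻¹) := by
      rw [hA0', Matrix.mul_add, hCbCt, mul_smul_comm, Matrix.mul_one]
    have he1' : (1 + nu • (Bhalf⁻¹ * C * Bhalf⁻¹)) * R0 = Bhalf⁻¹ * C * Bhalf⁻¹ := by
      rw [← h1, Matrix.mul_assoc, hA0R, Matrix.mul_one]
    have hstat : ystar + nu • ((Bhalf⁻¹ * C * Bhalf⁻¹) *ᵥ (ystar - cbar)) = 0 := by
      have e2 : ystar + nu • ((Bhalf⁻¹ * C * Bhalf⁻¹) *ᵥ (ystar - cbar))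
          = (1 + nu • (Bhalf⁻¹ * C * Bhalf⁻¹)) *ᵥ ystar
            - nu • ((Bhalf⁻¹ * C * Bhalf⁻¹) *ᵥ cbar) := by
        rw [Matrix.add_mulVec, Matrix.one_mulVec, Matrix.smul_mulVec, Matrix.mulVec_sub,
          smul_sub]
        abel
      have e3 : (1 + nu • (Bhalf⁻¹ * C * Bhalf⁻¹)) *ᵥ ystar
          = nu • ((Bhalf⁻¹ * C * Bhalf⁻¹) *ᵥ cbar) := by
        rw [hysdef, Matrix.mulVec_smul, Matrix.mulVec_mulVec, he1']
      rw [e2, e3, sub_self]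
    have hysc : ystar - cbar = -((Ctil * R0) *ᵥ cbar) := by
      have hCtR : Ctil * R0 = 1 - nu • R0 := by
        have h5 : Ctil = (Ctil - lam0 • (1 : Matrix (Fin n) (Fin n) ℝ))
            - nu • (1 : Matrix (Fin n) (Fin n) ℝ) := by
          rw [hA0']; abel
        rw [h5, Matrix.sub_mul, hA0R, smul_mul_assoc, Matrix.one_mul]
      rw [hCtR, Matrix.sub_mulVec, Matrix.one_mulVec, Matrix.smul_mulVec, neg_sub,
        hysdef]
    have hcommA0H : R0 * Cbarhalf⁻¹ = Cbarhalf⁻¹ * R0 := by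
      have ha : Ctil * Cbarhalf⁻¹ = Cbarhalf⁻¹ * Ctil := hcommHi.symm
      have hb' : (lam0 • (1 : Matrix (Fin n) (Fin n) ℝ)) * Cbarhalf⁻¹
          = Cbarhalf⁻¹ * (lam0 • (1 : Matrix (Fin n) (Fin n) ℝ)) := by
        rw [smul_mul_assoc, Matrix.one_mul, mul_smul_comm, Matrix.mul_one]
      have h2 : (Ctil - lam0 • (1 : Matrix (Fin n) (Fin n) ℝ)) * Cbarhalf⁻¹
          = Cbarhalf⁻¹ * (Ctil - lam0 • (1 : Matrix (Fin n) (Fin n) ℝ)) := by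
        rw [Matrix.sub_mul, Matrix.mul_sub, ha, hb']
      exact TouchingAux.inv_comm' hA0u h2
    have hbound : (ystar - cbar) ⬝ᵥ ((Bhalf⁻¹ * C * Bhalf⁻¹) *ᵥ (ystar - cbar)) = 1 := by
      rw [hysc, Matrix.mulVec_neg, neg_dotProduct_neg, ← hCbarsq]
      set e := (Ctil * R0) *ᵥ cbar with hedef
      rw [show (Cbarhalf * Cbarhalf) *ᵥ e = Cbarhalf *ᵥ (Cbarhalf *ᵥ e) from
        (Matrix.mulVec_mulVec e Cbarhalf Cbarhalf).symm]
      rw [TouchingAux.dot_symm hHt]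
      have h4 : Cbarhalf *ᵥ e = R0 *ᵥ ctil := by
        rw [hedef, Matrix.mulVec_mulVec, ← Matrix.mul_assoc, hHCt, ← hcommA0H,
          ← Matrix.mulVec_mulVec]
      rw [h4]
      have h5 := hflam
      simp only [hfdef] at h5
      rw [hR0def]
      exact h5
    constructor
    · show (xstar - c) ⬝ᵥ (C *ᵥ (xstar - c)) ≤ 1
      have hsplit : xstar - c = (xstar - b) - (c - b) := by abel
      have hxc : Bhalf *ᵥ (xstar - c) = ystar - cbar := by
        rw [hsplit, Matrix.mulVec_sub, hys]
      have hquad : (xstar - c) ⬝ᵥ (C *ᵥ (xstar - c))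
          = (ystar - cbar) ⬝ᵥ ((Bhalf⁻¹ * C * Bhalf⁻¹) *ᵥ (ystar - cbar)) := by
        conv_lhs => rw [← hBC]
        rw [TouchingAux.quad_conj hBt, hxc]
      rw [hquad, hbound]
    · intro x hx hxne
      have hxfe : (x - c) ⬝ᵥ (C *ᵥ (x - c)) ≤ 1 := hx
      have hsplit : x - c = (x - b) - (c - b) := by abel
      have hxc : Bhalf *ᵥ (x - c) = Bhalf *ᵥ (x - b) - cbar := by
        rw [hsplit, Matrix.mulVec_sub]
      have hyfeas : (Bhalf *ᵥ (x - b) - cbar) ⬝ᵥ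
          ((Bhalf⁻¹ * C * Bhalf⁻¹) *ᵥ (Bhalf *ᵥ (x - b) - cbar)) ≤ 1 := by
        calc (Bhalf *ᵥ (x - b) - cbar) ⬝ᵥ
            ((Bhalf⁻¹ * C * Bhalf⁻¹) *ᵥ (Bhalf *ᵥ (x - b) - cbar))
            = (x - c) ⬝ᵥ (C *ᵥ (x - c)) := by
              conv_rhs => rw [← hBC]
              rw [TouchingAux.quad_conj hBt, hxc]
          _ ≤ 1 := hxfe
      set y := Bhalf *ᵥ (x - b) with hydef
      set d := y - ystar with hddef
      have hdne : d ≠ 0 := by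
        intro h
        apply hxne
        have h1 : Bhalf *ᵥ (x - xstar) = 0 := by
          have hsplit2 : x - xstar = (x - b) - (xstar - b) := by abel
          rw [hsplit2, Matrix.mulVec_sub, hys, ← hydef, ← hddef]
          exact h
        exact sub_eq_zero.mp (TouchingAux.mulVec_injective hBu h1)
      have hobj1 : (xstar - b) ⬝ᵥ (B *ᵥ (xstar - b)) = ystar ⬝ᵥ ystar := by
        rw [← hBsq, show Bhalf * Bhalf = Bhalf * 1 * Bhalf from by rw [Matrix.mul_one],
          TouchingAux.quad_conj hBt, hys, Matrix.one_mulVec]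
      have hobj2 : (x - b) ⬝ᵥ (B *ᵥ (x - b)) = y ⬝ᵥ y := by
        rw [← hBsq, show Bhalf * Bhalf = Bhalf * 1 * Bhalf from by rw [Matrix.mul_one],
          TouchingAux.quad_conj hBt, Matrix.one_mulVec, ← hydef]
      rw [hobj1, hobj2]
      have hyd : y = ystar + d := by rw [hddef]; abel
      have he1 : y ⬝ᵥ y = ystar ⬝ᵥ ystar + 2 * (ystar ⬝ᵥ d) + d ⬝ᵥ d := by
        rw [hyd]
        simp only [dotProduct_add, add_dotProduct]
        rw [dotProduct_comm d ystar]
        ring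
      have hsymCb : ∀ p q : Fin n → ℝ, p ⬝ᵥ ((Bhalf⁻¹ * C * Bhalf⁻¹) *ᵥ q)
          = q ⬝ᵥ ((Bhalf⁻¹ * C * Bhalf⁻¹) *ᵥ p) := by
        intro p q
        rw [TouchingAux.dot_symm hCbt, dotProduct_comm]
      have he2 : (y - cbar) ⬝ᵥ ((Bhalf⁻¹ * C * Bhalf⁻¹) *ᵥ (y - cbar))
          = (ystar - cbar) ⬝ᵥ ((Bhalf⁻¹ * C * Bhalf⁻¹) *ᵥ (ystar - cbar))
            + 2 * (d ⬝ᵥ ((Bhalf⁻¹ * C * Bhalf⁻¹) *ᵥ (ystar - cbar)))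
            + d ⬝ᵥ ((Bhalf⁻¹ * C * Bhalf⁻¹) *ᵥ d) := by
        have hsplit3 : y - cbar = (ystar - cbar) + d := by rw [hyd]; abel
        rw [hsplit3, Matrix.mulVec_add, dotProduct_add, add_dotProduct,
          add_dotProduct]
        rw [hsymCb (ystar - cbar) d]
        ring
      have he3 : d ⬝ᵥ ystar + nu * (d ⬝ᵥ ((Bhalf⁻¹ * C * Bhalf⁻¹) *ᵥ (ystar - cbar))) = 0 := by
        have h0 := congrArg (fun v => d ⬝ᵥ v) hstat
        simpa only [dotProduct_add, dotProduct_smul, smul_eq_mul,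
          dotProduct_zero] using h0
      have hdd : 0 < d ⬝ᵥ d := TouchingAux.dot_self_pos hdne
      have hdCd : 0 ≤ d ⬝ᵥ ((Bhalf⁻¹ * C * Bhalf⁻¹) *ᵥ d) :=
        TouchingAux.psd_dot_nonneg hCb.posSemidef d
      have hcomm' : ystar ⬝ᵥ d = d ⬝ᵥ ystar := dotProduct_comm _ _
      have hkey : 2 * (d ⬝ᵥ ((Bhalf⁻¹ * C * Bhalf⁻¹) *ᵥ (ystar - cbar)))
          + d ⬝ᵥ ((Bhalf⁻¹ * C * Bhalf⁻¹) *ᵥ d) ≤ 0 := by linarith [he2, hyfeas, hbound]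
      nlinarith [he1, he3, hdd, hdCd, hnu, hcomm',
        mul_le_mul_of_nonneg_left hkey hnu.le]
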